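/- If f is an even symmetric psd not sos n-ary form of degree 2d (n ≥ 3), then (x_1 x_2 ⋯ x_n)^2 · f is an even symmetric psd not sos form of degree 2d + 2n. -/

import Mathlib

open MvPolynomial Finset

def IsSosForms {n : ℕ} (f : MvPolynomial (Fin n) ℝ) : Prop :=
  ∃ (k : ℕ) (h : Fin k → MvPolynomial (Fin n) ℝ),
    (∀ i, ∃ d, (h i).IsHomogeneous d) ∧ f = ∑ i, h i ^ 2

/-- Every variable occurs with even degree in every monomial. -/
def IsEvenForm {n : ℕ} (f : MvPolynomial (Fin n) ℝ) : Prop :=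
  ∀ m ∈ f.support, ∀ i, Even (m i)

namespace EvenSymmAux

/-- The all-ones exponent vector. -/
noncomputable def ones (n : ℕ) : Fin n →₀ ℕ := ∑ j, Finsupp.single j 1

lemma ones_apply {n : ℕ} (j : Fin n) : ones n j = 1 := by
  classical
  simp [ones, Finsupp.finset_sum_apply, Finsupp.single_apply]

lemma ones_weight {n : ℕ} : Finsupp.weight (1 : Fin n → ℕ) (ones n) = n := by
  classical
  rw [ones, map_sum]
  have : ∀ j : Fin n, Finsupp.weight (1 : Fin n → ℕ) (Finsupp.single j 1) = 1 := by
    intro j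
    rw [Finsupp.weight_apply, Finsupp.sum_single_index] <;> simp
  simp [this]

lemma prodX_eq (n : ℕ) :
    (∏ j : Fin n, (X j : MvPolynomial (Fin n) ℝ)) = monomial (ones n) 1 := by
  classical
  rw [ones]
  induction (univ : Finset (Fin n)) using Finset.induction_on with
  | empty => simp
  | insert _ _ hx ih =>
      rw [Finset.prod_insert hx, Finset.sum_insert hx, ih, X, monomial_mul, one_mul]

lemma sq_sum_zero {n k : ℕ} {p : Fin k → MvPolynomial (Fin n) ℝ}
    (hp : ∑ i, p i ^ 2 = 0) (i : Fin k) : p i = 0 := by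
  apply MvPolynomial.funext
  intro x
  have hx : ∑ i, (eval x (p i)) ^ 2 = 0 := by
    have := congrArg (eval x) hp
    simpa using this
  have h := (Finset.sum_eq_zero_iff_of_nonneg (fun i _ => sq_nonneg (eval x (p i)))).mp
    hx i (mem_univ i)
  have : eval x (p i) = 0 := by
    have := sq_eq_zero_iff.mp h
    simpa using this
  simpa using this

lemma coeff_aeval_zero_at {n : ℕ} (j : Fin n) (h : MvPolynomial (Fin n) ℝ)
    (m : Fin n →₀ ℕ) (hm : m j = 0) :
    coeff m (aeval (fun k => if k = j then (0 : MvPolynomial (Fin n) ℝ) else X k) h)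
      = coeff m h := by
  classical
  rw [aeval_def, eval₂_eq', coeff_sum]
  have key : ∀ d ∈ h.support,
      coeff m ((algebraMap ℝ (MvPolynomial (Fin n) ℝ)) (coeff d h) *
        ∏ i, (if i = j then (0 : MvPolynomial (Fin n) ℝ) else X i) ^ d i)
      = if d = m then coeff d h else 0 := by
    intro d _
    by_cases hdj : d j = 0
    · have hprod : (∏ i, (if i = j then (0 : MvPolynomial (Fin n) ℝ) else X i) ^ d i)
          = ∏ i, (X i : MvPolynomial (Fin n) ℝ) ^ d i := by
        apply Finset.prod_congr rfl
        intro i _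
        by_cases hij : i = j
        · subst hij; simp [hdj]
        · simp [hij]
      have hmon : (algebraMap ℝ (MvPolynomial (Fin n) ℝ)) (coeff d h) *
          ∏ i, (X i : MvPolynomial (Fin n) ℝ) ^ d i = monomial d (coeff d h) := by
        rw [MvPolynomial.algebraMap_eq, monomial_eq, Finsupp.prod_pow]
      rw [hprod, hmon, coeff_monomial]
    · rw [Finset.prod_eq_zero (mem_univ j) (by simp [hdj]), mul_zero, coeff_zero]
      have hne : d ≠ m := fun e => hdj (by rw [e, hm])
      simp [hne]
  rw [Finset.sum_congr rfl key, Finset.sum_ite_eq' h.support m (fun d => coeff d h)]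
  by_cases hm' : m ∈ h.support
  · simp [hm']
  · simp [hm', MvPolynomial.notMem_support_iff.mp hm']

lemma not_sos_transfer {n : ℕ} (f : MvPolynomial (Fin n) ℝ)
    (hsos : IsSosForms ((∏ i, X i : MvPolynomial (Fin n) ℝ) ^ 2 * f)) : IsSosForms f := by
  classical
  obtain ⟨k, h, hhom, heq⟩ := hsos
  set t := ones n with ht
  have hP : (∏ j : Fin n, (X j : MvPolynomial (Fin n) ℝ)) = monomial t 1 := prodX_eq n
  -- every monomial of each h i is divisible by every variable
  have hsupp : ∀ i, ∀ m ∈ (h i).support, t ≤ m := by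
    intro i m hm
    rw [Finsupp.le_def]
    intro j
    rw [ones_apply j]
    by_contra hj
    have hmj : m j = 0 := by omega
    -- substitute X j := 0
    set g : Fin n → MvPolynomial (Fin n) ℝ := fun k => if k = j then 0 else X k with hg
    have hP0 : aeval g (∏ i : Fin n, X i : MvPolynomial (Fin n) ℝ) = 0 := by
      rw [map_prod]
      exact Finset.prod_eq_zero (mem_univ j) (by simp [hg])
    have hsum0 : ∑ i, (aeval g (h i)) ^ 2 = 0 := by
      have := congrArg (aeval g) heq.symm
      rw [map_sum] at this
      simp only [map_pow] at this
      rw [this, map_mul, map_pow, hP0]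
      ring
    have hzero : aeval g (h i) = 0 := sq_sum_zero hsum0 i
    have : coeff m (h i) = 0 := by
      rw [← coeff_aeval_zero_at j (h i) m hmj, ← hg, hzero, coeff_zero]
    exact (MvPolynomial.mem_support_iff.mp hm) this
  -- the quotients
  set g : Fin k → MvPolynomial (Fin n) ℝ := fun i => MvPolynomial.divMonomial (h i) t with hgdef
  have hmod : ∀ i, MvPolynomial.modMonomial (h i) t = 0 := by
    intro i
    apply MvPolynomial.ext
    intro s
    rw [coeff_zero]
    by_cases hs : t ≤ s
    · exact MvPolynomial.coeff_modMonomial_of_le _ hs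
    · rw [MvPolynomial.coeff_modMonomial_of_not_le _ hs]
      by_contra hc
      exact hs (hsupp i s (MvPolynomial.mem_support_iff.mpr hc))
  have hfac : ∀ i, h i = monomial t 1 * g i := by
    intro i
    have := MvPolynomial.divMonomial_add_modMonomial (h i) t
    rw [hmod i, add_zero] at this
    exact this.symm
  have hPne : (monomial t (1 : ℝ) : MvPolynomial (Fin n) ℝ) ≠ 0 := by
    rw [Ne, MvPolynomial.monomial_eq_zero]
    exact one_ne_zero
  refine ⟨k, g, ?_, ?_⟩
  · intro i
    obtain ⟨di, hdi⟩ := hhom i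
    refine ⟨di - n, ?_⟩
    intro s hs
    have hco : coeff (t + s) (h i) ≠ 0 := by
      rwa [MvPolynomial.coeff_divMonomial] at hs
    have := hdi hco
    rw [map_add, ones_weight] at this
    simpa using by omega
  · have key : monomial t (1 : ℝ) ^ 2 * f = monomial t (1 : ℝ) ^ 2 * ∑ i, g i ^ 2 := by
      rw [← hP]
      rw [heq]
      rw [Finset.mul_sum]
      apply Finset.sum_congr rfl
      intro i _
      rw [hfac i, hP, mul_pow]
    exact mul_left_cancel₀ (pow_ne_zero 2 hPne) key

end EvenSymmAux

open EvenSymmAux in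
theorem even_symm_psd_not_sos_mul_prod_sq
    (n d : ℕ) (hn : 3 ≤ n) (f : MvPolynomial (Fin n) ℝ)
    (hf : f.IsHomogeneous (2 * d))
    (hsym : f.IsSymmetric)
    (heven : IsEvenForm f)
    (hpsd : ∀ x : Fin n → ℝ, 0 ≤ eval x f)
    (hnsos : ¬ IsSosForms f) :
    ((∏ i, X i) ^ 2 * f).IsHomogeneous (2 * d + 2 * n) ∧
      ((∏ i, X i : MvPolynomial (Fin n) ℝ) ^ 2 * f).IsSymmetric ∧
      IsEvenForm ((∏ i, X i : MvPolynomial (Fin n) ℝ) ^ 2 * f) ∧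
      (∀ x : Fin n → ℝ, 0 ≤ eval x ((∏ i, X i) ^ 2 * f)) ∧
      ¬ IsSosForms ((∏ i, X i : MvPolynomial (Fin n) ℝ) ^ 2 * f) := by
  classical
  have hPhom : (∏ i : Fin n, (X i : MvPolynomial (Fin n) ℝ)).IsHomogeneous n := by
    have := MvPolynomial.IsHomogeneous.prod (univ : Finset (Fin n))
      (fun i => (X i : MvPolynomial (Fin n) ℝ)) (fun _ => 1)
      (fun i _ => MvPolynomial.isHomogeneous_X ℝ i)
    simpa using this
  have hPsym : (∏ i : Fin n, (X i : MvPolynomial (Fin n) ℝ)).IsSymmetric := by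
    intro e
    rw [map_prod]
    simp only [rename_X]
    exact Equiv.prod_comp e (fun i => (X i : MvPolynomial (Fin n) ℝ))
  refine ⟨?_, ?_, ?_, ?_, ?_⟩
  · have := (hPhom.pow 2).mul hf
    have harith : n * 2 + 2 * d = 2 * d + 2 * n := by ring
    rwa [harith] at this
  · have h2 : ((∏ i, X i : MvPolynomial (Fin n) ℝ) ^ 2 * f)
        = (∏ i, X i : MvPolynomial (Fin n) ℝ) * ((∏ i, X i : MvPolynomial (Fin n) ℝ) * f) := by
      ring
    rw [h2]
    exact hPsym.mul (hPsym.mul hsym)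
  · intro m hm i
    have hP : (∏ j : Fin n, (X j : MvPolynomial (Fin n) ℝ)) = monomial (ones n) 1 := prodX_eq n
    have hsq : ((∏ j : Fin n, (X j : MvPolynomial (Fin n) ℝ))) ^ 2
        = monomial (ones n + ones n) 1 := by
      rw [hP, sq, monomial_mul, one_mul]
    rw [MvPolynomial.mem_support_iff, hsq, MvPolynomial.coeff_monomial_mul'] at hm
    by_cases hle : ones n + ones n ≤ m
    · rw [if_pos hle, one_mul] at hm
      have hmem : m - (ones n + ones n) ∈ f.support := MvPolynomial.mem_support_iff.mpr hm
      have heven' := heven _ hmem i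
      have hsub : (m - (ones n + ones n)) i = m i - 2 := by
        rw [Finsupp.tsub_apply, Finsupp.add_apply, ones_apply]
      have hle' : 2 ≤ m i := by
        have := (Finsupp.le_def.mp hle) i
        simpa [Finsupp.add_apply, ones_apply] using this
      rw [hsub] at heven'
      have : m i = (m i - 2) + 2 := by omega
      rw [this]
      exact heven'.add even_two
    · rw [if_neg hle] at hm
      exact absurd rfl hm
  · intro x
    rw [map_mul, map_pow]
    exact mul_nonneg (sq_nonneg _) (hpsd x)
  · intro hsos
    exact hnsos (not_sos_transfer f hsos)
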